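/- Let Ω ⊂ ℝ² be bounded and let L > 0 be such that Ω ⊂ B_L(z) for every z ∈ Ω. Then there exists a constant C > 0 such that for all y, z ∈ Ω with y ≠ z, ∫_Ω dx/(|x−y||x−z|) ≤ C(1 − log(|y−z|/L)). -/

import Mathlib

open MeasureTheory Filter Metric Set

noncomputable section

abbrev Pt := EuclideanSpace ℝ (Fin 2)

lemma master (y : Pt) {ε R : ℝ} (hε : 0 < ε) (hεR : ε ≤ R) :
    ∫⁻ x in Metric.ball y R, ENNReal.ofReal ((1 / dist x y) * min (1/ε) (1 / dist x y))
      ≤ volume (Metric.ball (0:Pt) 1) * ENNReal.ofReal (2 + 2 * Real.log (R / ε)) := by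
  set V := volume (Metric.ball (0:Pt) 1) with hV
  have hR : 0 < R := lt_of_lt_of_le hε hεR
  have hm : Measurable fun x : Pt => dist x y := (continuous_id.dist continuous_const).measurable
  have hfm : Measurable fun x : Pt => (1 / dist x y) * min (1/ε) (1 / dist x y) := by
    have h1 : Measurable fun x : Pt => 1 / dist x y := measurable_const.div hm
    exact h1.mul (measurable_const.min h1)
  have hfnn : ∀ x : Pt, 0 ≤ (1 / dist x y) * min (1/ε) (1 / dist x y) := by
    intro x
    apply mul_nonneg (by positivity)
    exact le_min (by positivity) (by positivity)
  rw [lintegral_eq_lintegral_meas_lt _ (Filter.Eventually.of_forall hfnn) hfm.aemeasurable]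
  -- radius function
  set ρ : ℝ → ℝ := fun t => min R (min (Real.sqrt t⁻¹) (ε*t)⁻¹) with hρ
  have hρnn : ∀ t, 0 < t → 0 ≤ ρ t := by
    intro t ht
    exact le_min hR.le (le_min (Real.sqrt_nonneg _) (by positivity))
  -- pointwise measure bound
  have hmeas : ∀ t ∈ Ioi (0:ℝ),
      (volume.restrict (Metric.ball y R)) {x : Pt | t < (1 / dist x y) * min (1/ε) (1 / dist x y)}
        ≤ ENNReal.ofReal (ρ t ^ 2) * V := by
    intro t ht
    have ht : (0:ℝ) < t := ht
    have hsub : {x : Pt | t < (1 / dist x y) * min (1/ε) (1 / dist x y)} ∩ Metric.ball y R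
        ⊆ Metric.closedBall y (ρ t) := by
      rintro x ⟨hx1, hx2⟩
      simp only [Set.mem_setOf_eq] at hx1
      set a := dist x y with ha
      have hann : 0 ≤ a := dist_nonneg
      have ha0 : 0 < a := by
        rcases eq_or_lt_of_le hann with h | h
        · exfalso; rw [← h] at hx1; simp at hx1; linarith
        · exact h
      have hb1 : (1 / a) * min (1/ε) (1/a) ≤ 1 / a^2 := by
        calc (1 / a) * min (1/ε) (1/a) ≤ (1/a) * (1/a) :=
              mul_le_mul_of_nonneg_left (min_le_right _ _) (by positivity)
          _ = 1 / a^2 := by rw [div_mul_div_comm, one_mul, sq]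
      have hb2 : (1 / a) * min (1/ε) (1/a) ≤ 1 / (ε * a) := by
        calc (1 / a) * min (1/ε) (1/a) ≤ (1/a) * (1/ε) :=
              mul_le_mul_of_nonneg_left (min_le_left _ _) (by positivity)
          _ = 1 / (ε * a) := by rw [div_mul_div_comm, one_mul, mul_comm]
      have h1 : a ≤ Real.sqrt t⁻¹ := by
        have : t < 1 / a^2 := lt_of_lt_of_le hx1 hb1
        have h3 : t * a^2 < 1 := (lt_div_iff₀ (by positivity)).1 this
        have h2 : a^2 < t⁻¹ := by
          rw [← one_div, lt_div_iff₀ ht]; nlinarith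
        calc a = Real.sqrt (a^2) := (Real.sqrt_sq hann).symm
          _ ≤ Real.sqrt t⁻¹ := Real.sqrt_le_sqrt h2.le
      have h2 : a ≤ (ε*t)⁻¹ := by
        have h3 : t < 1 / (ε * a) := lt_of_lt_of_le hx1 hb2
        rw [lt_div_iff₀ (by positivity)] at h3
        rw [← one_div, le_div_iff₀ (mul_pos hε ht)]
        nlinarith
      exact Metric.mem_closedBall.2 (le_min (le_of_lt hx2) (le_min h1 h2))
    calc (volume.restrict (Metric.ball y R)) {x : Pt | t < (1 / dist x y) * min (1/ε) (1 / dist x y)}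
        = volume ({x : Pt | t < (1 / dist x y) * min (1/ε) (1 / dist x y)} ∩ Metric.ball y R) := by
          rw [Measure.restrict_apply]
          exact measurableSet_lt measurable_const hfm
      _ ≤ volume (Metric.closedBall y (ρ t)) := measure_mono hsub
      _ = ENNReal.ofReal (ρ t ^ 2) * V := by
          rw [Measure.addHaar_closedBall volume y (hρnn t ht), finrank_euclideanSpace_fin]
  -- measurability of the bound
  have hρm : Measurable ρ := by
    apply measurable_const.min
    exact (Real.continuous_sqrt.measurable.comp measurable_inv).min
      ((measurable_id.const_mul ε).inv)
  have hgm : Measurable fun t : ℝ => ENNReal.ofReal (ρ t ^ 2) * V :=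
    (ENNReal.measurable_ofReal.comp (hρm.pow_const 2)).mul_const V
  have hl : 0 ≤ Real.log (R / ε) := Real.log_nonneg ((one_le_div hε).2 hεR)
  have hRi : (0:ℝ) < (R^2)⁻¹ := by positivity
  have hRεi : (R^2)⁻¹ ≤ (ε^2)⁻¹ := by
    apply inv_anti₀ (by positivity)
    gcongr
  calc ∫⁻ t in Ioi (0:ℝ),
        (volume.restrict (Metric.ball y R)) {x : Pt | t < (1 / dist x y) * min (1/ε) (1 / dist x y)}
      ≤ ∫⁻ t in Ioi (0:ℝ), ENNReal.ofReal (ρ t ^ 2) * V := setLIntegral_mono hgm hmeas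
    _ = ∫⁻ t in Ioc (0:ℝ) (R^2)⁻¹ ∪ (Ioc ((R^2)⁻¹) ((ε^2)⁻¹) ∪ Ioi ((ε^2)⁻¹)),
          ENNReal.ofReal (ρ t ^ 2) * V := by
        rw [Set.Ioc_union_Ioi_eq_Ioi hRεi, Set.Ioc_union_Ioi_eq_Ioi hRi.le]
    _ ≤ (∫⁻ t in Ioc (0:ℝ) (R^2)⁻¹, ENNReal.ofReal (ρ t ^ 2) * V)
        + ((∫⁻ t in Ioc ((R^2)⁻¹) ((ε^2)⁻¹), ENNReal.ofReal (ρ t ^ 2) * V)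
          + (∫⁻ t in Ioi ((ε^2)⁻¹), ENNReal.ofReal (ρ t ^ 2) * V)) :=
        le_trans (lintegral_union_le _ _ _) (by gcongr; exact lintegral_union_le _ _ _)
    _ ≤ V + (ENNReal.ofReal (2 * Real.log (R / ε)) * V + V) := by
        gcongr
        · -- piece 1
          calc ∫⁻ t in Ioc (0:ℝ) (R^2)⁻¹, ENNReal.ofReal (ρ t ^ 2) * V
              ≤ ∫⁻ _ in Ioc (0:ℝ) (R^2)⁻¹, ENNReal.ofReal (R ^ 2) * V := by
                apply setLIntegral_mono measurable_const
                intro t ht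
                exact mul_le_mul_left (ENNReal.ofReal_le_ofReal
                  (pow_le_pow_left₀ (hρnn t ht.1) (min_le_left _ _) 2)) V
            _ = ENNReal.ofReal (R ^ 2) * V * volume (Ioc (0:ℝ) (R^2)⁻¹) := setLIntegral_const _ _
            _ = V := by
                rw [Real.volume_Ioc]
                rw [mul_comm (ENNReal.ofReal (R^2)) V, mul_assoc, ← ENNReal.ofReal_mul (by positivity)]
                rw [show R^2 * ((R^2)⁻¹ - 0) = 1 by field_simp; ring]
                simp
        · -- piece 2
          calc ∫⁻ t in Ioc ((R^2)⁻¹) ((ε^2)⁻¹), ENNReal.ofReal (ρ t ^ 2) * V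
              ≤ ∫⁻ t in Ioc ((R^2)⁻¹) ((ε^2)⁻¹), ENNReal.ofReal t⁻¹ * V := by
                apply setLIntegral_mono (ENNReal.measurable_ofReal.comp measurable_inv |>.mul_const V)
                intro t ht
                have ht0 : (0:ℝ) < t := lt_trans hRi ht.1
                refine mul_le_mul_left (ENNReal.ofReal_le_ofReal ?_) V
                calc ρ t ^ 2 ≤ (Real.sqrt t⁻¹) ^ 2 := by
                      refine pow_le_pow_left₀ (hρnn t ht0) ?_ 2
                      exact le_trans (min_le_right _ _) (min_le_left _ _)
                  _ = t⁻¹ := Real.sq_sqrt (by positivity)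
            _ = (∫⁻ t in Ioc ((R^2)⁻¹) ((ε^2)⁻¹), ENNReal.ofReal t⁻¹) * V :=
                lintegral_mul_const _ (ENNReal.measurable_ofReal.comp measurable_inv)
            _ = ENNReal.ofReal (2 * Real.log (R / ε)) * V := by
                congr 1
                have hiint : IntegrableOn (fun t : ℝ => t⁻¹) (Ioc ((R^2)⁻¹) ((ε^2)⁻¹)) := by
                  refine (intervalIntegral.intervalIntegrable_inv (fun x hx => ?_) continuousOn_id).1
                  have := hx.1
                  rw [min_eq_left hRεi] at this
                  exact ne_of_gt (lt_of_lt_of_le hRi this)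
                rw [← ofReal_integral_eq_lintegral_ofReal hiint ?nn]
                case nn =>
                  filter_upwards [ae_restrict_mem measurableSet_Ioc] with t ht
                  have : (0:ℝ) < t := lt_trans hRi ht.1
                  positivity
                congr 1
                rw [← intervalIntegral.integral_of_le hRεi]
                have h0 : (0:ℝ) ∉ Set.uIcc ((R^2)⁻¹) ((ε^2)⁻¹) := by
                  intro h0
                  rw [Set.mem_uIcc] at h0
                  rcases h0 with ⟨h1, _⟩ | ⟨h1, _⟩ <;> nlinarith
                rw [integral_inv h0]
                rw [show ((ε^2)⁻¹ / (R^2)⁻¹) = (R/ε)^2 by field_simp]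
                rw [Real.log_pow]
                push_cast; ring
        · -- piece 3
          have hc : (0:ℝ) < (ε^2)⁻¹ := by positivity
          calc ∫⁻ t in Ioi ((ε^2)⁻¹), ENNReal.ofReal (ρ t ^ 2) * V
              ≤ ∫⁻ t in Ioi ((ε^2)⁻¹), ENNReal.ofReal ((ε^2)⁻¹ * t ^ (-2:ℝ)) * V := by
                apply setLIntegral_mono
                · exact (ENNReal.measurable_ofReal.comp
                    (measurable_const.mul (measurable_id.pow_const (-2:ℝ)))).mul_const V
                intro t ht
                have ht0 : (0:ℝ) < t := lt_trans hc ht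
                refine mul_le_mul_left (ENNReal.ofReal_le_ofReal ?_) V
                calc ρ t ^ 2 ≤ ((ε * t)⁻¹) ^ 2 := by
                      refine pow_le_pow_left₀ (hρnn t ht0) ?_ 2
                      exact le_trans (min_le_right _ _) (min_le_right _ _)
                  _ = (ε^2)⁻¹ * t ^ (-2:ℝ) := by
                      rw [show ((-2:ℝ)) = -((2:ℕ):ℝ) by norm_num, Real.rpow_neg ht0.le,
                        Real.rpow_natCast]
                      rw [mul_inv, mul_pow, inv_pow, inv_pow]
            _ = (∫⁻ t in Ioi ((ε^2)⁻¹), ENNReal.ofReal ((ε^2)⁻¹ * t ^ (-2:ℝ))) * V :=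
                lintegral_mul_const _ (ENNReal.measurable_ofReal.comp
                    (measurable_const.mul (measurable_id.pow_const (-2:ℝ))))
            _ ≤ V := by
                have hint : IntegrableOn (fun t : ℝ => (ε^2)⁻¹ * t ^ (-2:ℝ)) (Ioi ((ε^2)⁻¹)) :=
                  (integrableOn_Ioi_rpow_of_lt (by norm_num) hc).const_mul _
                rw [← ofReal_integral_eq_lintegral_ofReal hint ?nn3]
                case nn3 =>
                  filter_upwards [ae_restrict_mem measurableSet_Ioi] with t ht
                  have ht0 : (0:ℝ) < t := lt_trans hc ht
                  positivity
                · rw [MeasureTheory.integral_const_mul]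
                  rw [integral_Ioi_rpow_of_lt (by norm_num) hc]
                  rw [show ((-2:ℝ)+1) = -1 by norm_num]
                  rw [Real.rpow_neg_one]
                  rw [show (-((ε^2)⁻¹)⁻¹ / (-1:ℝ)) = ε^2 by field_simp]
                  rw [inv_mul_cancel₀ (by positivity)]
                  simp
    _ = V * ENNReal.ofReal (2 + 2 * Real.log (R / ε)) := by
        rw [show (2 + 2 * Real.log (R / ε)) = 1 + (2 * Real.log (R / ε) + 1) by ring]
        rw [ENNReal.ofReal_add (by norm_num) (by positivity),
          ENNReal.ofReal_add (by positivity) (by norm_num)]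
        rw [ENNReal.ofReal_one]
        ring

/-- logarithmic bound on the interaction integral `∫_Ω dx/(|x-y||x-z|)`. -/
theorem stmt5 (Ω : Set Pt) (hΩo : IsOpen Ω) (hΩb : Bornology.IsBounded Ω)
    (L : ℝ) (hL : 0 < L) (hcover : ∀ z ∈ Ω, Ω ⊆ Metric.ball z L) :
    ∃ C > 0, ∀ y ∈ Ω, ∀ z ∈ Ω, y ≠ z →
      ∫ x in Ω, 1 / (dist x y * dist x z) ≤ C * (1 - Real.log (dist y z / L)) := by
  set V := volume (Metric.ball (0:Pt) 1) with hV
  have hV0 : V ≠ 0 := (measure_ball_pos volume 0 one_pos).ne'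
  have hVtop : V ≠ ⊤ := measure_ball_lt_top.ne
  refine ⟨max 1 (4 * V.toReal * (1 + Real.log 2)),
    lt_of_lt_of_le one_pos (le_max_left _ _), ?_⟩
  intro y hy z hz hyz
  have hd0 : 0 < dist y z := dist_pos.2 hyz
  have hdL : dist y z < L := by
    have := hcover y hy hz
    rwa [Metric.mem_ball, dist_comm] at this
  set d := dist y z with hd
  set ε := d/2 with hε
  have hε0 : 0 < ε := by positivity
  have hεL : ε ≤ L := by rw [hε]; linarith
  set h₁ : Pt → ℝ := fun x => (1 / dist x y) * min (1/ε) (1 / dist x y) with hh₁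
  set h₂ : Pt → ℝ := fun x => (1 / dist x z) * min (1/ε) (1 / dist x z) with hh₂
  have hmy : Measurable fun x : Pt => dist x y := (continuous_id.dist continuous_const).measurable
  have hmz : Measurable fun x : Pt => dist x z := (continuous_id.dist continuous_const).measurable
  have hfm : Measurable fun x : Pt => 1 / (dist x y * dist x z) :=
    measurable_const.div (hmy.mul hmz)
  have hh₁m : Measurable h₁ :=
    (measurable_const.div hmy).mul (measurable_const.min (measurable_const.div hmy))
  have hh₂m : Measurable h₂ :=
    (measurable_const.div hmz).mul (measurable_const.min (measurable_const.div hmz))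
  have hfnn : ∀ x : Pt, 0 ≤ 1 / (dist x y * dist x z) := fun x => by positivity
  -- key elementary inequality
  have key : ∀ a b : ℝ, 0 ≤ a → a ≤ b → d ≤ a + b →
      1 / (a*b) ≤ (1/a) * min (1/ε) (1/a) := by
    intro a b ha hab hd'
    have hbnn : 0 ≤ b := le_trans ha hab
    rcases eq_or_lt_of_le ha with h|h
    · rw [← h, zero_mul, div_zero]
      apply mul_nonneg (by positivity) (le_min (by positivity) (by positivity))
    · have hb0 : ε ≤ b := by rw [hε]; linarith
      have hbpos : 0 < b := lt_of_lt_of_le hε0 hb0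
      calc 1/(a*b) = (1/a)*(1/b) := by rw [div_mul_div_comm, one_mul]
        _ ≤ (1/a) * min (1/ε) (1/a) := by
            apply mul_le_mul_of_nonneg_left _ (by positivity)
            exact le_min (one_div_le_one_div_of_le hε0 hb0)
              (one_div_le_one_div_of_le h hab)
  have hpt : ∀ x : Pt, ENNReal.ofReal (1 / (dist x y * dist x z))
      ≤ ENNReal.ofReal (h₁ x) + ENNReal.ofReal (h₂ x) := by
    intro x
    have htri : d ≤ dist x y + dist x z := by
      rw [hd]
      calc dist y z ≤ dist y x + dist x z := dist_triangle y x z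
        _ = dist x y + dist x z := by rw [dist_comm y x]
    rcases le_total (dist x y) (dist x z) with hab | hab
    · refine le_trans (ENNReal.ofReal_le_ofReal (key _ _ dist_nonneg hab htri)) le_self_add
    · have : 1 / (dist x y * dist x z) = 1 / (dist x z * dist x y) := by rw [mul_comm]
      rw [this]
      refine le_trans (ENNReal.ofReal_le_ofReal
        (key _ _ dist_nonneg hab (by linarith))) le_add_self
  -- the lintegral bound
  have hle : ∫⁻ x in Ω, ENNReal.ofReal (1 / (dist x y * dist x z))
      ≤ V * ENNReal.ofReal (4 + 4 * Real.log (L/ε)) := by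
    calc ∫⁻ x in Ω, ENNReal.ofReal (1 / (dist x y * dist x z))
        ≤ ∫⁻ x in Ω, (ENNReal.ofReal (h₁ x) + ENNReal.ofReal (h₂ x)) :=
          lintegral_mono fun x => hpt x
      _ = (∫⁻ x in Ω, ENNReal.ofReal (h₁ x)) + ∫⁻ x in Ω, ENNReal.ofReal (h₂ x) :=
          lintegral_add_left (ENNReal.measurable_ofReal.comp hh₁m) _
      _ ≤ (∫⁻ x in Metric.ball y L, ENNReal.ofReal (h₁ x))
          + ∫⁻ x in Metric.ball z L, ENNReal.ofReal (h₂ x) :=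
          add_le_add (lintegral_mono_set (hcover y hy)) (lintegral_mono_set (hcover z hz))
      _ ≤ V * ENNReal.ofReal (2 + 2 * Real.log (L/ε))
          + V * ENNReal.ofReal (2 + 2 * Real.log (L/ε)) :=
          add_le_add (master y hε0 hεL) (master z hε0 hεL)
      _ = V * ENNReal.ofReal (4 + 4 * Real.log (L/ε)) := by
          have hl : 0 ≤ Real.log (L/ε) := Real.log_nonneg ((one_le_div hε0).2 hεL)
          rw [← mul_add, ← ENNReal.ofReal_add (by positivity) (by positivity)]
          congr 2
          ring
  -- convert to Bochner integral
  rw [integral_eq_lintegral_of_nonneg_ae (Filter.Eventually.of_forall hfnn)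
    hfm.aestronglyMeasurable]
  have hfin : V * ENNReal.ofReal (4 + 4 * Real.log (L/ε)) ≠ ⊤ :=
    ENNReal.mul_ne_top hVtop ENNReal.ofReal_ne_top
  have hl : 0 ≤ Real.log (L/ε) := Real.log_nonneg ((one_le_div hε0).2 hεL)
  calc (∫⁻ x in Ω, ENNReal.ofReal (1 / (dist x y * dist x z))).toReal
      ≤ (V * ENNReal.ofReal (4 + 4 * Real.log (L/ε))).toReal := ENNReal.toReal_mono hfin hle
    _ = V.toReal * (4 + 4 * Real.log (L/ε)) := by
        rw [ENNReal.toReal_mul, ENNReal.toReal_ofReal (by positivity)]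
    _ ≤ max 1 (4 * V.toReal * (1 + Real.log 2)) * (1 - Real.log (d / L)) := by
        have hlog : Real.log (L/ε) = Real.log 2 - Real.log (d/L) := by
          rw [hε, show L/(d/2) = 2*(L/d) by field_simp]
          rw [Real.log_mul two_ne_zero (by positivity), Real.log_div hL.ne' hd0.ne',
            Real.log_div hd0.ne' hL.ne']
          ring
        rw [hlog]
        have hs : Real.log (d/L) ≤ 0 :=
          Real.log_nonpos (by positivity) ((div_le_one hL).2 hdL.le)
        have hVt : 0 ≤ V.toReal := ENNReal.toReal_nonneg
        have hlog2 : 0 ≤ Real.log 2 := Real.log_nonneg one_le_two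
        have hM : 4 * V.toReal * (1 + Real.log 2) ≤ max 1 (4 * V.toReal * (1 + Real.log 2)) :=
          le_max_right _ _
        nlinarith [mul_nonneg hVt (neg_nonneg.2 hs), mul_nonneg (mul_nonneg hVt hlog2) (neg_nonneg.2 hs), mul_nonneg (le_trans (by positivity) hM) (neg_nonneg.2 hs)]
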